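/- arXiv:1709.01547 — 2 statements merged into one kernel-verified Lean document; each statement's English description precedes it below -/
import Mathlib

section
/- Under the hypotheses: y_1, ..., y_m ∈ ℝ^n with 1−ε ≤ ‖y_i‖ ≤ 1, β_2(m−1) ≤ ∑_{j≠i}⟨y_i, y_j⟩ ≤ β_1(m−1) for all i, (1−ε)² + β_2(m−1) > 0, and ȳ = (1/m)∑ y_i; the linear functional ℓ(x) = ⟨ȳ/‖ȳ‖, x⟩ − (1/√m)·((1−ε)² + β_2(m−1))/√(1 + (m−1)β_1) satisfies ℓ(y_i) ≥ 0 for every i = 1, ..., m. -/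
open Finset

/-- The separating functional built from the mean of a positively correlated cluster is
nonnegative on every member of the cluster. -/
theorem functional_nonneg_on_cluster (n m : ℕ) (hm : 1 ≤ m) (ε : ℝ)
    (hε : ε ∈ Set.Ioo (0:ℝ) 1)
    (β₁ β₂ : ℝ) (hβ : β₁ ≥ β₂) (hβ₂ : β₂ > 0)
    (hpos : (1 - ε)^2 + β₂ * ((m:ℝ) - 1) > 0)
    (y : Fin m → EuclideanSpace ℝ (Fin n))
    (hlo : ∀ i, 1 - ε ≤ ‖y i‖) (hhi : ∀ i, ‖y i‖ ≤ 1)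
    (hcorr : ∀ i, β₂ * ((m:ℝ) - 1) ≤ ∑ j ∈ univ.erase i, (inner ℝ (y i) (y j) : ℝ) ∧
        ∑ j ∈ univ.erase i, (inner ℝ (y i) (y j) : ℝ) ≤ β₁ * ((m:ℝ) - 1)) :
    ∀ i, 0 ≤ (inner ℝ (‖(1/(m:ℝ)) • ∑ j, y j‖⁻¹ • ((1/(m:ℝ)) • ∑ j, y j)) (y i) : ℝ) -
        (1 / Real.sqrt m) *
          (((1 - ε)^2 + β₂ * ((m:ℝ) - 1)) / Real.sqrt (1 + ((m:ℝ) - 1) * β₁)) := by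
  intro i
  set S : EuclideanSpace ℝ (Fin n) := ∑ j, y j with hS
  set A : ℝ := (1 - ε)^2 + β₂ * ((m:ℝ) - 1) with hA
  have hm0 : (0:ℝ) < m := by exact_mod_cast hm
  have hεlt : ε < 1 := hε.2
  have h1ε : (0:ℝ) ≤ 1 - ε := by linarith
  -- inner S (y k) decomposition
  have hdec : ∀ k, (inner ℝ S (y k) : ℝ) =
      ‖y k‖^2 + ∑ j ∈ univ.erase k, (inner ℝ (y k) (y j) : ℝ) := by
    intro k
    rw [hS, sum_inner, ← Finset.add_sum_erase _ _ (mem_univ k),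
      real_inner_self_eq_norm_sq]
    congr 1
    exact Finset.sum_congr rfl fun j _ => real_inner_comm _ _
  have hlow : ∀ k, A ≤ (inner ℝ S (y k) : ℝ) := by
    intro k
    rw [hdec k, hA]
    have : (1 - ε)^2 ≤ ‖y k‖^2 := by
      apply pow_le_pow_left₀ h1ε (hlo k)
    nlinarith [(hcorr k).1]
  have hhigh : ∀ k, (inner ℝ S (y k) : ℝ) ≤ 1 + ((m:ℝ) - 1) * β₁ := by
    intro k
    rw [hdec k]
    have h1 : ‖y k‖^2 ≤ 1 := by nlinarith [hhi k, norm_nonneg (y k)]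
    nlinarith [(hcorr k).2]
  have hApos : 0 < A := hpos
  have hSi : 0 < (inner ℝ S (y i) : ℝ) := lt_of_lt_of_le hApos (hlow i)
  -- norm of S bound
  have hnormsq : ‖S‖^2 ≤ (m:ℝ) * (1 + ((m:ℝ) - 1) * β₁) := by
    have : ‖S‖^2 = ∑ k, (inner ℝ S (y k) : ℝ) := by
      rw [← real_inner_self_eq_norm_sq]
      conv_lhs => rw [hS]
      rw [inner_sum]
    rw [this]
    calc ∑ k, (inner ℝ S (y k) : ℝ) ≤ ∑ k : Fin m, (1 + ((m:ℝ) - 1) * β₁) :=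
          Finset.sum_le_sum fun k _ => hhigh k
      _ = (m:ℝ) * (1 + ((m:ℝ) - 1) * β₁) := by simp [mul_comm]; ring
  have hSpos : 0 < ‖S‖ := by
    rcases eq_or_lt_of_le (norm_nonneg S) with h | h
    · exfalso
      have : S = 0 := by simpa using h.symm
      rw [this] at hSi; simp at hSi
    · exact h
  have hBpos : (0:ℝ) < 1 + ((m:ℝ) - 1) * β₁ := by
    have : (0:ℝ) ≤ (m:ℝ) - 1 := by
      have : (1:ℝ) ≤ m := by exact_mod_cast hm
      linarith
    nlinarith
  have hnormle : ‖S‖ ≤ Real.sqrt m * Real.sqrt (1 + ((m:ℝ) - 1) * β₁) := by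
    rw [← Real.sqrt_mul hm0.le]
    have := Real.sqrt_le_sqrt hnormsq
    rwa [Real.sqrt_sq (norm_nonneg S)] at this
  -- rewrite the LHS inner product
  have hmane : (1/(m:ℝ)) ≠ 0 := by positivity
  have hlhs : (inner ℝ (‖(1/(m:ℝ)) • S‖⁻¹ • ((1/(m:ℝ)) • S)) (y i) : ℝ)
      = ‖S‖⁻¹ * (inner ℝ S (y i) : ℝ) := by
    rw [real_inner_smul_left, real_inner_smul_left, norm_smul]
    have : ‖(1/(m:ℝ))‖ = 1/(m:ℝ) := by
      rw [Real.norm_eq_abs, abs_of_pos (by positivity)]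
    rw [this, mul_inv]
    field_simp
  rw [hlhs, sub_nonneg]
  have hdenpos : 0 < Real.sqrt m * Real.sqrt (1 + ((m:ℝ) - 1) * β₁) := by
    positivity
  have key : A / (Real.sqrt m * Real.sqrt (1 + ((m:ℝ) - 1) * β₁))
      ≤ (inner ℝ S (y i) : ℝ) / ‖S‖ := by
    apply div_le_div₀ (le_of_lt hSi) (hlow i) hSpos hnormle
  calc (1 / Real.sqrt m) * (A / Real.sqrt (1 + ((m:ℝ) - 1) * β₁))
      = A / (Real.sqrt m * Real.sqrt (1 + ((m:ℝ) - 1) * β₁)) := by ring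
    _ ≤ (inner ℝ S (y i) : ℝ) / ‖S‖ := key
    _ = ‖S‖⁻¹ * (inner ℝ S (y i) : ℝ) := by rw [div_eq_inv_mul]
end

section
/- Let z_1, ..., z_M, z be i.i.d. random vectors in ℝ^d whose coordinates are independent random variables taking values in [0,1], each coordinate j having variance σ_j² > σ_0² > 0. If M ≤ (ϑ/3)·exp(d·σ_0⁴/2) − 1 for some ϑ ∈ (0,1), then with probability greater than 1 − ϑ there exists an affine functional ℓ with ℓ(z) ≥ 0 and ℓ(z_i) < 0 for all i = 1, ..., M. -/
open MeasureTheory Finset ProbabilityTheory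

theorem my_integral_pi {n : ℕ} {E : Fin n → Type*} [∀ i, MeasurableSpace (E i)]
    (μ : ∀ i, Measure (E i)) [∀ i, SigmaFinite (μ i)] (f : (i : Fin n) → E i → ℝ) :
    ∫ x, ∏ i, f i (x i) ∂Measure.pi μ = ∏ i, ∫ x, f i x ∂μ i := by
  induction n with
  | zero => simp [measureReal_def, Measure.pi_univ]
  | succ n ih =>
      calc
        ∫ x, ∏ i, f i (x i) ∂Measure.pi μ
            = ∫ x : E 0 × ((i : Fin n) → E (Fin.succ i)),
                f 0 x.1 * ∏ i : Fin n, f (Fin.succ i) (x.2 i)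
                ∂((μ 0).prod (Measure.pi fun i => μ (Fin.succ i))) := by
          rw [← ((measurePreserving_piFinSuccAbove μ 0).symm).integral_comp']
          simp_rw [MeasurableEquiv.piFinSuccAbove_symm_apply, Fin.insertNthEquiv,
            Fin.prod_univ_succ, Fin.insertNth_zero, Equiv.coe_fn_mk, Fin.cons_succ,
            Fin.zero_succAbove, Fin.cons_zero]
          rfl
        _ = (∫ x, f 0 x ∂μ 0) * ∏ i : Fin n, ∫ x, f (Fin.succ i) x ∂μ (Fin.succ i) := by
          rw [← ih, ← integral_prod_mul]
        _ = ∏ i, ∫ x, f i x ∂μ i := by rw [Fin.prod_univ_succ]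

theorem my_pi_map_eval {n : ℕ} {E : Type*} [MeasurableSpace E] (μ : Fin n → Measure E)
    [∀ i, IsProbabilityMeasure (μ i)] (i : Fin n) :
    Measure.map (Function.eval i) (Measure.pi μ) = μ i := by
  ext s hs
  rw [Measure.map_apply (measurable_pi_apply i) hs, Set.eval_preimage, Measure.pi_pi]
  rw [Finset.prod_eq_single i (fun j _ hj => by simp [Function.update_of_ne hj]) (by simp)]
  simp

theorem exp_le_one_add_self_add_sq {t : ℝ} (ht : |t| ≤ 1) :
    Real.exp t ≤ 1 + t + t ^ 2 := by
  have h := Real.exp_bound ht (by norm_num : (0:ℕ) < 2)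
  have h2 : |Real.exp t - (1 + t)| ≤ |t| ^ 2 * (3 / 4) := by
    have := h
    simp [Finset.sum_range_succ] at this
    convert this using 2 <;> norm_num
  have h3 : Real.exp t - (1 + t) ≤ |t| ^ 2 * (3 / 4) := (abs_le.1 h2).2
  have h4 : |t| ^ 2 = t ^ 2 := sq_abs t
  nlinarith [sq_nonneg t]

theorem my_mgf_bound (μ : Measure ℝ) [IsProbabilityMeasure μ] {f : ℝ → ℝ}
    (hm : Measurable f) (hb : ∀ᵐ x ∂μ, |f x| ≤ 1) (h0 : ∫ x, f x ∂μ = 0)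
    {v : ℝ} (hv : ∫ x, (f x)^2 ∂μ ≤ v) :
    ∫ x, Real.exp (f x) ∂μ ≤ Real.exp v := by
  have hint_f : Integrable f μ :=
    (integrable_const 1).mono' hm.aestronglyMeasurable (by filter_upwards [hb] with x h; simpa using h)
  have hint_f2 : Integrable (fun x => (f x)^2) μ :=
    (integrable_const 1).mono' (hm.pow_const 2).aestronglyMeasurable
      (by filter_upwards [hb] with x h
          have : (f x)^2 ≤ 1 := by nlinarith [abs_nonneg (f x), sq_abs (f x), abs_le.1 h]
          simp [abs_of_nonneg (sq_nonneg (f x))]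
          nlinarith [sq_abs (f x), abs_le.1 h])
  have hint_exp : Integrable (fun x => Real.exp (f x)) μ :=
    (integrable_const (Real.exp 1)).mono' (Real.measurable_exp.comp hm).aestronglyMeasurable
      (by filter_upwards [hb] with x h
          rw [Real.norm_eq_abs, abs_of_pos (Real.exp_pos _)]
          exact Real.exp_le_exp.2 (abs_le.1 h).2)
  have step1 : ∫ x, Real.exp (f x) ∂μ ≤ ∫ x, (1 + f x + (f x)^2) ∂μ := by
    refine integral_mono_ae hint_exp (((integrable_const 1).add hint_f).add hint_f2) ?_
    filter_upwards [hb] with x h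
    exact exp_le_one_add_self_add_sq h
  have step2 : ∫ x, (1 + f x + (f x)^2) ∂μ = 1 + ∫ x, (f x)^2 ∂μ := by
    have e1 : Integrable (fun x => 1 + f x) μ := (integrable_const 1).add hint_f
    simp only [integral_add e1 hint_f2, integral_add (integrable_const 1) hint_f,
      integral_const, h0]
    simp
  calc ∫ x, Real.exp (f x) ∂μ ≤ 1 + ∫ x, (f x)^2 ∂μ := by rw [← step2]; exact step1
    _ ≤ 1 + v := by linarith
    _ ≤ Real.exp v := by linarith [Real.add_one_le_exp v]

theorem my_pi_tail {n : ℕ} (ν : Fin n → Measure ℝ) [∀ j, IsProbabilityMeasure (ν j)]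
    {g : Fin n → ℝ → ℝ} (hm : ∀ j, Measurable (g j))
    (hb : ∀ j, ∀ᵐ x ∂ν j, |g j x| ≤ 1) (h0 : ∀ j, ∫ x, g j x ∂ν j = 0)
    {v : Fin n → ℝ} (hv : ∀ j, ∫ x, (g j x)^2 ∂ν j ≤ v j) (t : ℝ) :
    Measure.pi ν {x | t ≤ ∑ j, g j (x j)} ≤ ENNReal.ofReal (Real.exp (∑ j, v j - t)) := by
  set P := Measure.pi ν
  have hP : IsProbabilityMeasure P := by infer_instance
  set F : (Fin n → ℝ) → ℝ := fun x => Real.exp (∑ j, g j (x j)) with hF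
  have hFm : Measurable F :=
    Real.measurable_exp.comp (Finset.measurable_sum _ fun j _ => (hm j).comp (measurable_pi_apply j))
  have haeb : ∀ᵐ x ∂P, ∀ j, |g j (x j)| ≤ 1 := by
    rw [MeasureTheory.ae_all_iff]
    exact fun j => Measure.tendsto_eval_ae_ae.eventually (hb j)
  have hFint : Integrable F P := by
    refine (integrable_const (Real.exp n)).mono' hFm.aestronglyMeasurable ?_
    filter_upwards [haeb] with x h
    rw [Real.norm_eq_abs, abs_of_pos (Real.exp_pos _)]
    refine Real.exp_le_exp.2 ?_
    calc ∑ j, g j (x j) ≤ ∑ j : Fin n, (1:ℝ) := by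
          exact Finset.sum_le_sum fun j _ => (abs_le.1 (h j)).2
      _ = n := by simp
  have hFprod : ∫ x, F x ∂P = ∏ j, ∫ x, Real.exp (g j x) ∂ν j := by
    have : F = fun x => ∏ j, Real.exp (g j (x j)) := by
      funext x; exact Real.exp_sum _ _
    rw [this]
    exact my_integral_pi ν fun j x => Real.exp (g j x)
  have hFle : ∫ x, F x ∂P ≤ Real.exp (∑ j, v j) := by
    rw [hFprod, Real.exp_sum]
    refine Finset.prod_le_prod (fun j _ => integral_nonneg fun x => (Real.exp_pos _).le)
      fun j _ => my_mgf_bound (ν j) (hm j) (hb j) (h0 j) (hv j)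
  have hsub : {x | t ≤ ∑ j, g j (x j)} ⊆ {x | Real.exp t ≤ F x} :=
    fun x hx => Real.exp_le_exp.2 hx
  have hmark : Real.exp t * (P {x | Real.exp t ≤ F x}).toReal ≤ ∫ x, F x ∂P :=
    mul_meas_ge_le_integral_of_nonneg (ae_of_all P fun x => (Real.exp_pos _).le) hFint (Real.exp t)
  have h1 : (P {x | Real.exp t ≤ F x}).toReal ≤ Real.exp (∑ j, v j - t) := by
    have h2 : Real.exp t * (P {x | Real.exp t ≤ F x}).toReal ≤ Real.exp (∑ j, v j) :=
      le_trans hmark hFle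
    rw [Real.exp_sub, le_div_iff₀ (Real.exp_pos t)]
    linarith
  calc P {x | t ≤ ∑ j, g j (x j)} ≤ P {x | Real.exp t ≤ F x} := measure_mono hsub
    _ ≤ ENNReal.ofReal (Real.exp (∑ j, v j - t)) := by
        rw [← ENNReal.ofReal_toReal (measure_ne_top P _)]
        exact ENNReal.ofReal_le_ofReal h1

set_option maxHeartbeats 1600000 in
/-- Separation theorem for product distributions on the unit cube (core of Theorem 3):
if `z_1, …, z_M, z` are i.i.d. random vectors in `ℝ^d` whose coordinates are independent,
supported in `[0,1]`, with coordinate variances `σ_j² > σ_0² > 0`, and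
`M ≤ (ϑ/3)·exp(d σ_0⁴/2) − 1`, then with probability greater than `1 − ϑ` some affine
functional is nonnegative at `z` and negative at every `z_i`. -/
theorem product_measure_separation (d M : ℕ) (hd : 0 < d)
    (ν : Fin d → Measure ℝ) (hprob : ∀ j, IsProbabilityMeasure (ν j))
    (hsupp : ∀ j, ν j (Set.Icc (0:ℝ) 1) = 1)
    (σ : Fin d → ℝ) (σ₀ : ℝ) (hσ₀ : 0 < σ₀)
    (hvar : ∀ j, variance (fun x => x) (ν j) = (σ j)^2)
    (hσ : ∀ j, σ₀^2 < (σ j)^2)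
    (ϑ : ℝ) (hϑ : ϑ ∈ Set.Ioo (0:ℝ) 1)
    (hM : (M:ℝ) ≤ (ϑ/3) * Real.exp ((d:ℝ) * σ₀^4 / 2) - 1) :
    ENNReal.ofReal (1 - ϑ) <
      ((Measure.pi fun _ : Fin M => Measure.pi ν).prod (Measure.pi ν))
        {p : (Fin M → (Fin d → ℝ)) × (Fin d → ℝ) |
          ∃ (u : Fin d → ℝ) (c : ℝ),
            0 ≤ (∑ j, u j * p.2 j) - c ∧
            ∀ i, (∑ j, u j * p.1 i j) - c < 0} := by
  haveI := hprob
  obtain ⟨hϑ0, hϑ1⟩ := hϑ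
  have hd1 : (1:ℝ) ≤ (d:ℝ) := by exact_mod_cast hd
  set c : ℝ := (d:ℝ) * σ₀^4 / 2 with hc_def
  set a : ℝ := 2 * (d:ℝ) * σ₀^4 / 3 with ha_def
  set m : Fin d → ℝ := fun j => ∫ x, x ∂ν j with hm_def
  set P2 : Measure (Fin d → ℝ) := Measure.pi ν with hP2_def
  set P1 : Measure (Fin M → Fin d → ℝ) := Measure.pi (fun _ : Fin M => P2) with hP1_def
  haveI : IsProbabilityMeasure P2 := by rw [hP2_def]; infer_instance
  haveI : IsProbabilityMeasure P1 := by rw [hP1_def]; infer_instance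
  set P := P1.prod P2 with hP_def
  haveI : IsProbabilityMeasure P := by rw [hP_def]; infer_instance
  -- basic facts about the coordinate measures
  have hae : ∀ j, ∀ᵐ x ∂ν j, x ∈ Set.Icc (0:ℝ) 1 := by
    intro j
    have h1 : ν j (Set.Icc (0:ℝ) 1)ᶜ = 0 := by
      rw [measure_compl measurableSet_Icc (measure_ne_top _ _), hsupp j,
        measure_univ, tsub_self]
    exact ae_iff.2 h1
  have hint_id : ∀ j, Integrable (fun x : ℝ => x) (ν j) := by
    intro j
    refine (integrable_const 1).mono' measurable_id.aestronglyMeasurable ?_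
    filter_upwards [hae j] with x hx
    rw [Real.norm_eq_abs, abs_le]
    exact ⟨by linarith [hx.1], by linarith [hx.2]⟩
  have hm01 : ∀ j, m j ∈ Set.Icc (0:ℝ) 1 := by
    intro j
    constructor
    · exact integral_nonneg_of_ae ((hae j).mono fun x hx => hx.1)
    · calc ∫ x, x ∂ν j ≤ ∫ _, (1:ℝ) ∂ν j :=
            integral_mono_ae (hint_id j) (integrable_const 1) ((hae j).mono fun x hx => hx.2)
        _ = 1 := by simp
  have hmemlp : ∀ j, MemLp (fun x : ℝ => x) 2 (ν j) := fun j =>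
    memLp_of_bounded (hae j) measurable_id.aestronglyMeasurable 2
  have hvar' : ∀ j, ∫ x, (x - m j)^2 ∂ν j = (σ j)^2 := by
    intro j
    rw [← hvar j, variance_eq_integral (hmemlp j).aemeasurable]
  have hσle : ∀ j, (σ j)^2 ≤ 1/4 := by
    intro j
    rw [← hvar j]
    calc variance (fun x => x) (ν j) ≤ ((1 - 0)/2)^2 :=
          variance_le_sq_of_bounded (hae j) measurable_id.aemeasurable
      _ = 1/4 := by norm_num
  have hσ₀le : σ₀^2 ≤ 1/4 := le_of_lt (lt_of_lt_of_le (hσ ⟨0, hd⟩) (hσle ⟨0, hd⟩))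
  have hint_sq : ∀ j, Integrable (fun x => (x - m j)^2) (ν j) := by
    intro j
    refine (integrable_const 1).mono'
      ((measurable_id.sub_const (m j)).pow_const 2).aestronglyMeasurable ?_
    filter_upwards [hae j] with x hx
    rw [Real.norm_eq_abs, abs_of_nonneg (sq_nonneg _)]
    nlinarith [hx.1, hx.2, (hm01 j).1, (hm01 j).2]
  have habs1 : ∀ j, ∀ᵐ x ∂ν j, |x - m j| ≤ 1 := by
    intro j
    filter_upwards [hae j] with x hx
    rw [abs_le]
    exact ⟨by linarith [hx.1, (hm01 j).2], by linarith [hx.2, (hm01 j).1]⟩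
  -- the quadratic form s and the good set A
  set s : (Fin d → ℝ) → ℝ := fun z => ∑ j, (z j - m j)^2 with hs_def
  have hs_meas : Measurable s :=
    Finset.measurable_sum _ fun j _ => by fun_prop
  set cube : Set (Fin d → ℝ) := {z | ∀ j, z j ∈ Set.Icc (0:ℝ) 1} with hcube_def
  have hcube_eq : cube = Set.pi Set.univ (fun _ : Fin d => Set.Icc (0:ℝ) 1) := by
    ext z
    simp only [hcube_def, Set.mem_setOf_eq, Set.mem_univ_pi]
  have hcube_meas : MeasurableSet cube := by
    rw [hcube_eq]
    exact MeasurableSet.pi Set.countable_univ fun j _ => measurableSet_Icc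
  set A : Set (Fin d → ℝ) := cube ∩ {z | a ≤ s z} with hA_def
  have hA_meas : MeasurableSet A :=
    hA_def ▸ hcube_meas.inter (measurableSet_le measurable_const hs_meas)
  have hcube0 : P2 cubeᶜ = 0 := by
    rw [measure_compl hcube_meas (measure_ne_top _ _), hcube_eq, hP2_def, Measure.pi_pi]
    simp [hsupp, measure_univ]
  -- V and its lower bound
  set V : ℝ := ∑ j, (σ j)^2 with hV_def
  have hV : (d:ℝ) * σ₀^2 ≤ V := by
    rw [hV_def]
    calc (d:ℝ) * σ₀^2 = ∑ _j : Fin d, σ₀^2 := by rw [Finset.sum_const]; simp [mul_comm]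
      _ ≤ ∑ j, (σ j)^2 := Finset.sum_le_sum fun j _ => (hσ j).le
  -- Tail bound 2 : s is rarely small
  have key2 : P2 {z | s z < a} ≤ ENNReal.ofReal (Real.exp (-c)) := by
    have hg_meas : ∀ j, Measurable (fun x : ℝ => ((σ j)^2 - (x - m j)^2)/2) := fun j =>
      (measurable_const.sub ((measurable_id.sub_const (m j)).pow_const 2)).div_const 2
    have hg_b : ∀ j, ∀ᵐ x ∂ν j, |((σ j)^2 - (x - m j)^2)/2| ≤ 1 := by
      intro j
      filter_upwards [habs1 j] with x hx
      have h1 : (x - m j)^2 ≤ 1 := by nlinarith [abs_le.1 hx |>.1, abs_le.1 hx |>.2, abs_nonneg (x - m j), sq_abs (x - m j)]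
      have h2 : (0:ℝ) ≤ (x - m j)^2 := sq_nonneg _
      have h3 := hσle j
      have h4 : (0:ℝ) ≤ (σ j)^2 := sq_nonneg _
      rw [abs_le]
      constructor <;> linarith
    have hg_0 : ∀ j, ∫ x, ((σ j)^2 - (x - m j)^2)/2 ∂ν j = 0 := by
      intro j
      rw [integral_div, integral_sub (integrable_const _) (hint_sq j), integral_const, hvar' j]
      simp
    have hg_v : ∀ j, ∫ x, (((σ j)^2 - (x - m j)^2)/2)^2 ∂ν j ≤ (σ j)^2/4 := by
      intro j
      have hint_g2 : Integrable (fun x => (((σ j)^2 - (x - m j)^2)/2)^2) (ν j) := by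
        refine (integrable_const 1).mono' ((hg_meas j).pow_const 2).aestronglyMeasurable ?_
        filter_upwards [hg_b j] with x hx
        rw [Real.norm_eq_abs, abs_of_nonneg (sq_nonneg _)]
        nlinarith [abs_le.1 hx |>.1, abs_le.1 hx |>.2]
      have hint_rhs : Integrable (fun x => (σ j)^4/4 + ((1 - 2*(σ j)^2)/4) * (x - m j)^2) (ν j) :=
        (integrable_const _).add ((hint_sq j).const_mul _)
      have hmono : ∫ x, (((σ j)^2 - (x - m j)^2)/2)^2 ∂ν j
          ≤ ∫ x, ((σ j)^4/4 + ((1 - 2*(σ j)^2)/4) * (x - m j)^2) ∂ν j := by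
        refine integral_mono_ae hint_g2 hint_rhs ?_
        filter_upwards [habs1 j] with x hx
        have h1 : (x - m j)^2 ≤ 1 := by nlinarith [abs_le.1 hx |>.1, abs_le.1 hx |>.2, abs_nonneg (x - m j), sq_abs (x - m j)]
        have h2 : (0:ℝ) ≤ (x - m j)^2 := sq_nonneg _
        nlinarith [sq_nonneg (x - m j)]
      have hcomp : ∫ x, ((σ j)^4/4 + ((1 - 2*(σ j)^2)/4) * (x - m j)^2) ∂ν j
          = (σ j)^4/4 + ((1 - 2*(σ j)^2)/4) * (σ j)^2 := by
        rw [integral_add (integrable_const _) ((hint_sq j).const_mul _), integral_const,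
          integral_const_mul, hvar' j]
        simp
      rw [hcomp] at hmono
      nlinarith [sq_nonneg ((σ j)^2)]
    have happ := my_pi_tail ν hg_meas hg_b hg_0 hg_v ((V - a)/2)
    have hsub : {z : Fin d → ℝ | s z < a} ⊆ {z | (V - a)/2 ≤ ∑ j, ((σ j)^2 - (z j - m j)^2)/2} := by
      intro z hz
      simp only [Set.mem_setOf_eq] at hz ⊢
      have heq : ∑ j, ((σ j)^2 - (z j - m j)^2)/2 = (V - s z)/2 := by
        rw [hV_def, hs_def]
        rw [← Finset.sum_div, Finset.sum_sub_distrib]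
      rw [heq]
      linarith
    have hbound : ∑ j, (σ j)^2/4 - (V - a)/2 ≤ -c := by
      have heq : ∑ j, (σ j)^2/4 = V/4 := by rw [hV_def, Finset.sum_div]
      rw [heq, hc_def, ha_def]
      nlinarith [hV, hσ₀le, hd1, sq_nonneg σ₀,
        mul_le_mul_of_nonneg_left hσ₀le (by positivity : (0:ℝ) ≤ (d:ℝ) * σ₀^2)]
    calc P2 {z | s z < a} ≤ P2 {z | (V - a)/2 ≤ ∑ j, ((σ j)^2 - (z j - m j)^2)/2} :=
          measure_mono hsub
      _ ≤ ENNReal.ofReal (Real.exp (∑ j, (σ j)^2/4 - (V - a)/2)) := happ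
      _ ≤ ENNReal.ofReal (Real.exp (-c)) := ENNReal.ofReal_le_ofReal (Real.exp_le_exp.2 hbound)
  -- Tail bound 1 : for z in A, correlation with a fresh sample is rarely ≥ s z
  have key1 : ∀ z ∈ A, P2 {y | s z ≤ ∑ j, (z j - m j) * (y j - m j)}
      ≤ ENNReal.ofReal (Real.exp (-c)) := by
    intro z hzA
    obtain ⟨hz_cube, hz_a⟩ := hzA
    have hz_cube' : ∀ j, z j ∈ Set.Icc (0:ℝ) 1 := hz_cube
    have hz_a' : a ≤ s z := hz_a
    have hz1 : ∀ j, |z j - m j| ≤ 1 := by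
      intro j
      have h1 := hz_cube' j
      rw [abs_le]
      exact ⟨by linarith [h1.1, (hm01 j).2], by linarith [h1.2, (hm01 j).1]⟩
    have hg_meas : ∀ j, Measurable (fun x : ℝ => (z j - m j) * (x - m j)) := fun j =>
      measurable_const.mul (measurable_id.sub_const (m j))
    have hg_b : ∀ j, ∀ᵐ x ∂ν j, |(z j - m j) * (x - m j)| ≤ 1 := by
      intro j
      filter_upwards [habs1 j] with x hx
      rw [abs_mul]
      nlinarith [hz1 j, abs_nonneg (z j - m j), abs_nonneg (x - m j)]
    have hg_0 : ∀ j, ∫ x, (z j - m j) * (x - m j) ∂ν j = 0 := by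
      intro j
      rw [integral_const_mul, integral_sub (hint_id j) (integrable_const _), integral_const]
      have : (∫ x, x ∂ν j) = m j := rfl
      rw [this]
      simp
    have hg_v : ∀ j, ∫ x, ((z j - m j) * (x - m j))^2 ∂ν j ≤ (z j - m j)^2 * (1/4) := by
      intro j
      have heq : ∀ x : ℝ, ((z j - m j) * (x - m j))^2 = (z j - m j)^2 * (x - m j)^2 :=
        fun x => by ring
      simp_rw [heq]
      rw [integral_const_mul, hvar' j]
      exact mul_le_mul_of_nonneg_left (hσle j) (sq_nonneg _)
    have happ := my_pi_tail ν hg_meas hg_b hg_0 hg_v (s z)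
    refine le_trans happ (ENNReal.ofReal_le_ofReal (Real.exp_le_exp.2 ?_))
    have hsum : ∑ j, (z j - m j)^2 * (1/4) = s z * (1/4) := by
      rw [hs_def, ← Finset.sum_mul]
    rw [hsum]
    rw [ha_def] at hz_a'
    rw [hc_def]
    linarith
  -- bad events
  set B0 : Set ((Fin M → Fin d → ℝ) × (Fin d → ℝ)) := {p | p.2 ∉ A} with hB0_def
  set Bi : Fin M → Set ((Fin M → Fin d → ℝ) × (Fin d → ℝ)) := fun i =>
    {p | p.2 ∈ A ∧ s p.2 ≤ ∑ j, (p.2 j - m j) * (p.1 i j - m j)} with hBi_def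
  have hB0_meas : MeasurableSet B0 := (hA_meas.compl).preimage measurable_snd
  have hBi_meas : ∀ i, MeasurableSet (Bi i) := by
    intro i
    exact (hA_meas.preimage measurable_snd).inter (measurableSet_le
      (hs_meas.comp measurable_snd)
      (Finset.measurable_sum _ fun j _ => by fun_prop))
  set B := B0 ∪ ⋃ i, Bi i with hB_def
  have hB_meas : MeasurableSet B := hB0_meas.union (MeasurableSet.iUnion hBi_meas)
  -- bound on the bad events
  have hPB0 : P B0 ≤ ENNReal.ofReal (Real.exp (-c)) := by
    have hB0eq : B0 = Set.univ ×ˢ Aᶜ := by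
      ext p; simp [hB0_def]
    rw [hB0eq, hP_def, Measure.prod_prod, measure_univ, one_mul]
    have hsub : Aᶜ ⊆ cubeᶜ ∪ {z | s z < a} := by
      intro z hz
      rw [hA_def] at hz
      simp only [Set.mem_compl_iff, Set.mem_inter_iff, not_and, Set.mem_setOf_eq] at hz
      by_cases hzc : z ∈ cube
      · exact Or.inr (by simpa using lt_of_not_ge (hz hzc))
      · exact Or.inl hzc
    calc P2 Aᶜ ≤ P2 (cubeᶜ ∪ {z | s z < a}) := measure_mono hsub
      _ ≤ P2 cubeᶜ + P2 {z | s z < a} := measure_union_le _ _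
      _ ≤ 0 + ENNReal.ofReal (Real.exp (-c)) := add_le_add (le_of_eq hcube0) key2
      _ = ENNReal.ofReal (Real.exp (-c)) := by rw [zero_add]
  have hPBi : ∀ i, P (Bi i) ≤ ENNReal.ofReal (Real.exp (-c)) := by
    intro i
    rw [hP_def, Measure.prod_apply_symm (hBi_meas i)]
    have hpt : ∀ z : Fin d → ℝ, P1 ((fun f => (f, z)) ⁻¹' Bi i)
        ≤ ENNReal.ofReal (Real.exp (-c)) := by
      intro z
      by_cases hz : z ∈ A
      · have hEz_meas : MeasurableSet {y : Fin d → ℝ | s z ≤ ∑ j, (z j - m j) * (y j - m j)} :=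
          measurableSet_le measurable_const
            (Finset.measurable_sum _ fun j _ =>
              by fun_prop)
        have heq : ((fun f => (f, z)) ⁻¹' Bi i) =
            Function.eval i ⁻¹' {y : Fin d → ℝ | s z ≤ ∑ j, (z j - m j) * (y j - m j)} := by
          ext f
          simp [hBi_def, hz, Function.eval]
        rw [heq, ← Measure.map_apply (measurable_pi_apply i) hEz_meas,
          my_pi_map_eval (fun _ : Fin M => P2) i]
        exact key1 z hz
      · have heq : ((fun f => (f, z)) ⁻¹' Bi i) = ∅ := by
          ext f; simp [hBi_def, hz]
        simp [heq]
    calc ∫⁻ z, P1 ((fun f => (f, z)) ⁻¹' Bi i) ∂P2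
        ≤ ∫⁻ _, ENNReal.ofReal (Real.exp (-c)) ∂P2 := lintegral_mono hpt
      _ = ENNReal.ofReal (Real.exp (-c)) := by simp
  have hPB : P B ≤ ENNReal.ofReal (ϑ/3) := by
    have h1 : P B ≤ P B0 + ∑ i, P (Bi i) := by
      rw [hB_def]
      exact le_trans (measure_union_le _ _)
        (add_le_add le_rfl (measure_iUnion_fintype_le _ _))
    have h2 : ∑ i : Fin M, P (Bi i) ≤ (M : ENNReal) * ENNReal.ofReal (Real.exp (-c)) := by
      calc ∑ i : Fin M, P (Bi i) ≤ ∑ _i : Fin M, ENNReal.ofReal (Real.exp (-c)) :=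
            Finset.sum_le_sum fun i _ => hPBi i
        _ = (M : ENNReal) * ENNReal.ofReal (Real.exp (-c)) := by
            rw [Finset.sum_const]; simp [nsmul_eq_mul]
    have h3 : ((M:ℝ)+1) * Real.exp (-c) ≤ ϑ/3 := by
      have h4 : ((M:ℝ)+1) * Real.exp (-c) ≤ ((ϑ/3) * Real.exp c) * Real.exp (-c) := by
        apply mul_le_mul_of_nonneg_right _ (Real.exp_pos _).le
        rw [hc_def]; linarith
      rw [mul_assoc, ← Real.exp_add, add_neg_cancel, Real.exp_zero, mul_one] at h4
      exact h4
    calc P B ≤ P B0 + ∑ i, P (Bi i) := h1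
      _ ≤ ENNReal.ofReal (Real.exp (-c)) + (M : ENNReal) * ENNReal.ofReal (Real.exp (-c)) :=
          add_le_add hPB0 h2
      _ = ENNReal.ofReal (((M:ℝ)+1) * Real.exp (-c)) := by
          rw [ENNReal.ofReal_mul (by positivity), ENNReal.ofReal_add (by positivity) zero_le_one]
          rw [ENNReal.ofReal_natCast, ENNReal.ofReal_one]
          ring
      _ ≤ ENNReal.ofReal (ϑ/3) := ENNReal.ofReal_le_ofReal h3
  -- the complement of B is contained in the target event
  have hsubset : Bᶜ ⊆ {p : (Fin M → (Fin d → ℝ)) × (Fin d → ℝ) |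
      ∃ (u : Fin d → ℝ) (c : ℝ),
        0 ≤ (∑ j, u j * p.2 j) - c ∧ ∀ i, (∑ j, u j * p.1 i j) - c < 0} := by
    intro p hp
    rw [hB_def] at hp
    simp only [Set.mem_compl_iff, Set.mem_union, Set.mem_iUnion, not_or, not_exists] at hp
    obtain ⟨hp0, hpi⟩ := hp
    have hpA : p.2 ∈ A := by
      by_contra h
      exact hp0 h
    refine ⟨fun j => p.2 j - m j, (∑ j, (p.2 j - m j) * m j) + s p.2, ?_, ?_⟩
    · have hkey : ∑ j, (p.2 j - m j) * p.2 j - ∑ j, (p.2 j - m j) * m j = s p.2 := by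
        rw [← Finset.sum_sub_distrib, hs_def]
        exact Finset.sum_congr rfl fun j _ => by ring
      linarith
    · intro i
      have hlt : ∑ j, (p.2 j - m j) * (p.1 i j - m j) < s p.2 := by
        have := hpi i
        rw [hBi_def] at this
        simp only [Set.mem_setOf_eq, not_and, not_le] at this
        exact this hpA
      have hkey : ∑ j, (p.2 j - m j) * p.1 i j - ∑ j, (p.2 j - m j) * m j
          = ∑ j, (p.2 j - m j) * (p.1 i j - m j) := by
        rw [← Finset.sum_sub_distrib]
        exact Finset.sum_congr rfl fun j _ => by ring
      linarith
  -- conclusion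
  calc ENNReal.ofReal (1 - ϑ) < ENNReal.ofReal (1 - ϑ/3) :=
        (ENNReal.ofReal_lt_ofReal_iff (by linarith)).2 (by linarith)
    _ = 1 - ENNReal.ofReal (ϑ/3) := by
        rw [← ENNReal.ofReal_one, ← ENNReal.ofReal_sub _ (by linarith)]
    _ ≤ 1 - P B := tsub_le_tsub_left hPB 1
    _ = P Bᶜ := (prob_compl_eq_one_sub hB_meas).symm
    _ ≤ _ := measure_mono hsubset
end
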